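/- Let (G,H) be a Hecke pair with length function L (L vanishing on H). If (G,H) has property (RD′) with constants C, s (i.e., ‖λ(f)‖ ≤ C·(Σ_{g∈⟨G//H⟩}|f(g)|²(1+L(g))^{2s})^{1/2} for all f in the Hecke algebra), then for every g ∈ G the number of right cosets contained in HgH satisfies |HgH/~| ≤ C²(1+L(g))^{2s}, where ~ identifies elements of the same right coset Hx. -/

import Mathlib

open scoped BigOperators

/-- A length function on a group `G`. -/
def IsLengthFunction {G : Type*} [Group G] (L : G → ℝ) : Prop :=
  (∀ g, 0 ≤ L g) ∧ (∀ g h, L (g * h) ≤ L g + L h) ∧ (∀ g, L g⁻¹ = L g) ∧ L 1 = 0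

/-- The `ℓ²`-norm of a function (junk value `0` if not square-summable). -/
noncomputable def l2f {α : Type*} (φ : α → ℂ) : ℝ :=
  Real.sqrt (∑' x, ‖φ x‖ ^ 2)

/-- A complex-valued function is nonnegative real valued. -/
def NonnegFun {α : Type*} (f : α → ℂ) : Prop := ∀ x, ∃ t : ℝ, 0 ≤ t ∧ f x = t

variable {G : Type*} [Group G]

/-- The set `H\G` of right cosets `Hg`. -/
abbrev RC (H : Subgroup G) := Quotient (QuotientGroup.rightRel H)

/-- The right coset of `g`. -/
def mkRC (H : Subgroup G) (g : G) : RC H := Quotient.mk (QuotientGroup.rightRel H) g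

/-- The set `G//H` of double cosets `HgH`. -/
abbrev DC (H : Subgroup G) := DoubleCoset.Quotient (H : Set G) (H : Set G)

/-- The double coset of `g`. -/
def mkDC (H : Subgroup G) (g : G) : DC H := DoubleCoset.mk H H g

/-- A representative of a right coset. -/
noncomputable def repRC (H : Subgroup G) (x : RC H) : G := Quotient.out x

/-- The natural map sending a right coset to the double coset containing it. -/
noncomputable def toDC (H : Subgroup G) (x : RC H) : DC H := mkDC H (repRC H x)

/-- `H` is almost normal in `G`: every double coset `HgH` contains only finitely
many right cosets. -/
def AlmostNormal (H : Subgroup G) : Prop :=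
  ∀ g : G, {x : RC H | ∃ h ∈ H, ∃ k ∈ H, x = mkRC H (h * g * k)}.Finite

/-- Convolution of a Hecke algebra element (a finitely supported function on `G//H`)
with a function on `H\G`:  `(f * ξ)(Hg) = ∑_{γ ∈ ⟨H\G⟩} f(HγH) ξ(Hγ⁻¹g)`. -/
noncomputable def convH (H : Subgroup G) (f : DC H →₀ ℂ) (ξ : RC H → ℂ) : RC H → ℂ :=
  fun y => ∑' x : RC H, f (toDC H x) * ξ (mkRC H ((repRC H x)⁻¹ * repRC H y))

/-- The operator norm of the regular representation `λ(f)` on `ℓ²(H\G)`. -/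
noncomputable def opNH (H : Subgroup G) (f : DC H →₀ ℂ) : ℝ :=
  sSup {c : ℝ | ∃ ξ : RC H →₀ ℂ, l2f ⇑ξ ≤ 1 ∧ c = l2f (convH H f ⇑ξ)}

/-- The weighted `ℓ²`-norm `‖f‖_{s,L}` of a Hecke algebra element, summing over
right cosets `⟨H\G⟩`. -/
noncomputable def wnormH (H : Subgroup G) (L : G → ℝ) (s : ℝ) (f : DC H →₀ ℂ) : ℝ :=
  Real.sqrt (∑' x : RC H, ‖f (toDC H x)‖ ^ 2 * (1 + L (repRC H x)) ^ (2 * s))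

/-- The `ℓ²(H\G)`-norm of a Hecke algebra element. -/
noncomputable def l2H (H : Subgroup G) (f : DC H →₀ ℂ) : ℝ :=
  l2f (fun x : RC H => f (toDC H x))

/-- The RD′-norm: the weighted `ℓ²`-norm summing over double cosets `⟨G//H⟩`. -/
noncomputable def wnormH' {G : Type*} [Group G] (H : Subgroup G) (L : G → ℝ) (s : ℝ)
    (f : DC H →₀ ℂ) : ℝ :=
  Real.sqrt (∑ D ∈ f.support, ‖f D‖ ^ 2 * (1 + L (Quotient.out D)) ^ (2 * s))

namespace Stmt7Aux

lemma mkRC_eq_iff (H : Subgroup G) (a b : G) : mkRC H a = mkRC H b ↔ b * a⁻¹ ∈ H := by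
  constructor
  · intro h; exact QuotientGroup.rightRel_apply.mp (Quotient.exact h)
  · intro h; exact Quotient.sound (QuotientGroup.rightRel_apply.mpr h)

lemma mkRC_rep (H : Subgroup G) (x : RC H) : mkRC H (repRC H x) = x := Quotient.out_eq x

/-- The set of right cosets inside `HgH`. -/
def Fset (H : Subgroup G) (g : G) : Set (RC H) :=
  {x : RC H | ∃ h ∈ H, ∃ k ∈ H, x = mkRC H (h * g * k)}

lemma mem_Fset_iff (H : Subgroup G) (g : G) (x : RC H) :
    x ∈ Fset H g ↔ toDC H x = mkDC H g := by
  constructor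
  · rintro ⟨h, hh, k, hk, rfl⟩
    have h1 : mkRC H (repRC H (mkRC H (h * g * k))) = mkRC H (h * g * k) := mkRC_rep H _
    have h2 : (h * g * k) * (repRC H (mkRC H (h * g * k)))⁻¹ ∈ H :=
      (mkRC_eq_iff H _ _).mp h1
    set r := repRC H (mkRC H (h * g * k)) with hr
    show DoubleCoset.mk H H r = DoubleCoset.mk H H g
    rw [DoubleCoset.eq]
    exact ⟨h⁻¹ * (h * g * k * r⁻¹), mul_mem (inv_mem hh) h2, k⁻¹, inv_mem hk, by group⟩
  · intro ht
    have ht' : DoubleCoset.mk H H (repRC H x) = DoubleCoset.mk H H g := ht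
    obtain ⟨h, hh, k, hk, hg⟩ := (DoubleCoset.eq H H _ g).mp ht'
    refine ⟨h⁻¹, inv_mem hh, k⁻¹, inv_mem hk, ?_⟩
    rw [← mkRC_rep H x]
    congr 1
    rw [hg]; group

lemma Fset_eq (H : Subgroup G) {a g : G} (ha : mkDC H a = mkDC H g) :
    Fset H a = Fset H g := by
  ext x; rw [mem_Fset_iff, mem_Fset_iff, ha]

lemma fiber_finite_card (H : Subgroup G) (hAN : AlmostNormal H) {g a : G}
    (ha : mkDC H a = mkDC H g) (b : RC H) :
    {y : RC H | mkRC H (a⁻¹ * repRC H y) = b}.Finite ∧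
    {y : RC H | mkRC H (a⁻¹ * repRC H y) = b}.ncard ≤ (Fset H g).ncard := by
  have hFfin : (Fset H g).Finite := hAN g
  set φ : RC H → RC H := fun y => mkRC H (repRC H y * (repRC H b)⁻¹) with hφ
  have hinj : Function.Injective φ := by
    intro y y' hyy
    have h1 := (mkRC_eq_iff H _ _).mp hyy
    have e : repRC H y' * (repRC H b)⁻¹ * (repRC H y * (repRC H b)⁻¹)⁻¹
        = repRC H y' * (repRC H y)⁻¹ := by group
    rw [e] at h1
    have h2 := (mkRC_eq_iff H (repRC H y) (repRC H y')).mpr h1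
    rwa [mkRC_rep, mkRC_rep] at h2
  have hsub : φ '' {y : RC H | mkRC H (a⁻¹ * repRC H y) = b} ⊆ Fset H g := by
    rintro _ ⟨y, hy, rfl⟩
    have hy' : mkRC H (a⁻¹ * repRC H y) = mkRC H (repRC H b) := by
      rw [mkRC_rep]; exact hy
    have h1 : repRC H b * (a⁻¹ * repRC H y)⁻¹ ∈ H := (mkRC_eq_iff H _ _).mp hy'
    rw [← Fset_eq H ha]
    refine ⟨1, one_mem H, (repRC H b * (a⁻¹ * repRC H y)⁻¹)⁻¹, inv_mem h1, ?_⟩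
    show mkRC H (repRC H y * (repRC H b)⁻¹) = _
    congr 1
    group
  have hfin : {y : RC H | mkRC H (a⁻¹ * repRC H y) = b}.Finite :=
    Set.Finite.of_finite_image (hFfin.subset hsub) hinj.injOn
  refine ⟨hfin, ?_⟩
  calc {y : RC H | mkRC H (a⁻¹ * repRC H y) = b}.ncard
      = (φ '' {y : RC H | mkRC H (a⁻¹ * repRC H y) = b}).ncard :=
        (Set.ncard_image_of_injective _ hinj).symm
    _ ≤ (Fset H g).ncard := Set.ncard_le_ncard hsub hFfin

lemma conv_eq (H : Subgroup G) (hAN : AlmostNormal H) (g : G) (ξ : RC H → ℂ) (y : RC H) :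
    convH H (Finsupp.single (mkDC H g) 1) ξ y
      = ∑ x ∈ (hAN g).toFinset, ξ (mkRC H ((repRC H x)⁻¹ * repRC H y)) := by
  have hFfin : (Fset H g).Finite := hAN g
  unfold convH
  rw [tsum_eq_sum (s := (hAN g).toFinset) ?_]
  · refine Finset.sum_congr rfl fun x hx => ?_
    have hx' : toDC H x = mkDC H g := (mem_Fset_iff H g x).mp (hFfin.mem_toFinset.mp hx)
    rw [hx', Finsupp.single_eq_same, one_mul]
  · intro x hx
    have hx' : toDC H x ≠ mkDC H g := fun h =>
      hx (hFfin.mem_toFinset.mpr ((mem_Fset_iff H g x).mpr h))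
    rw [Finsupp.single_eq_of_ne hx', zero_mul]


lemma conv_le (H : Subgroup G) (hAN : AlmostNormal H) (g : G) (ξ : RC H →₀ ℂ)
    (hξ : l2f ⇑ξ ≤ 1) :
    l2f (convH H (Finsupp.single (mkDC H g) 1) ⇑ξ)
      ≤ Real.sqrt (((Fset H g).ncard : ℝ) ^ 3) := by
  classical
  have hFfin : (Fset H g).Finite := hAN g
  set N : ℝ := ((Fset H g).ncard : ℝ) with hN
  have hN0 : 0 ≤ N := Nat.cast_nonneg _
  set Fs : Finset (RC H) := hFfin.toFinset with hFs
  have hcard : (Fs.card : ℝ) = N := by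
    rw [hN, Set.ncard_eq_toFinset_card (Fset H g) hFfin]
  -- basic facts about ξ
  have hsum : Summable (fun z : RC H => ‖ξ z‖ ^ 2) := by
    apply summable_of_ne_finset_zero (s := ξ.support)
    intro b hb
    rw [Finsupp.notMem_support_iff.mp hb]; simp
  have htsum1 : ∑' z : RC H, ‖ξ z‖ ^ 2 ≤ 1 := by
    have h0 : 0 ≤ ∑' z : RC H, ‖ξ z‖ ^ 2 := tsum_nonneg fun z => by positivity
    have h1 : (l2f ⇑ξ) ^ 2 ≤ 1 ^ 2 := pow_le_pow_left₀ (Real.sqrt_nonneg _) hξ 2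
    rwa [l2f, Real.sq_sqrt h0, one_pow] at h1
  -- x in Fs gives a double coset identity
  have hxdc : ∀ x ∈ Fs, mkDC H (repRC H x) = mkDC H g := fun x hx =>
    (mem_Fset_iff H g x).mp (hFfin.mem_toFinset.mp hx)
  -- the finite support set Y
  set Y : Set (RC H) :=
    ⋃ x ∈ Fs, ⋃ z ∈ ξ.support, {y : RC H | mkRC H ((repRC H x)⁻¹ * repRC H y) = z} with hY
  have hYfin : Y.Finite :=
    Set.Finite.biUnion Fs.finite_toSet fun x hx =>
      Set.Finite.biUnion ξ.support.finite_toSet fun z _ =>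
        (fiber_finite_card H hAN (hxdc x hx) z).1
  set Ys : Finset (RC H) := hYfin.toFinset with hYs
  have hconv0 : ∀ y ∉ Ys, convH H (Finsupp.single (mkDC H g) 1) ⇑ξ y = 0 := by
    intro y hy
    rw [conv_eq H hAN g]
    apply Finset.sum_eq_zero
    intro x hx
    by_contra hne
    apply hy
    rw [hYfin.mem_toFinset, hY]
    refine Set.mem_biUnion hx ?_
    exact Set.mem_biUnion (Finsupp.mem_support_iff.mpr hne) rfl
  -- pointwise Cauchy-Schwarz
  have step1 : ∀ y : RC H, ‖convH H (Finsupp.single (mkDC H g) 1) ⇑ξ y‖ ^ 2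
      ≤ N * ∑ x ∈ Fs, ‖ξ (mkRC H ((repRC H x)⁻¹ * repRC H y))‖ ^ 2 := by
    intro y
    rw [conv_eq H hAN g]
    calc ‖∑ x ∈ Fs, ξ (mkRC H ((repRC H x)⁻¹ * repRC H y))‖ ^ 2
        ≤ (∑ x ∈ Fs, ‖ξ (mkRC H ((repRC H x)⁻¹ * repRC H y))‖) ^ 2 :=
          pow_le_pow_left₀ (norm_nonneg _) (norm_sum_le _ _) 2
      _ ≤ (Fs.card : ℝ) * ∑ x ∈ Fs, ‖ξ (mkRC H ((repRC H x)⁻¹ * repRC H y))‖ ^ 2 :=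
          sq_sum_le_card_mul_sum_sq
      _ = N * _ := by rw [hcard]
  -- fiber counting
  have step2 : ∀ x ∈ Fs, ∑ y ∈ Ys, ‖ξ (mkRC H ((repRC H x)⁻¹ * repRC H y))‖ ^ 2 ≤ N := by
    intro x hx
    rw [Finset.sum_comp (fun z => ‖ξ z‖ ^ 2) (fun y => mkRC H ((repRC H x)⁻¹ * repRC H y))]
    have hcardfil : ∀ b : RC H,
        (((Finset.filter (fun y => mkRC H ((repRC H x)⁻¹ * repRC H y) = b) Ys).card : ℝ)) ≤ N := by
      intro b
      have h1 : ((Finset.filter (fun y => mkRC H ((repRC H x)⁻¹ * repRC H y) = b) Ys) : Set (RC H))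
          ⊆ {y : RC H | mkRC H ((repRC H x)⁻¹ * repRC H y) = b} := by
        intro y hy
        exact (Finset.mem_filter.mp hy).2
      have h2 := fiber_finite_card H hAN (hxdc x hx) b
      have h3 : (Finset.filter (fun y => mkRC H ((repRC H x)⁻¹ * repRC H y) = b) Ys).card
          ≤ (Fset H g).ncard := by
        calc (Finset.filter (fun y => mkRC H ((repRC H x)⁻¹ * repRC H y) = b) Ys).card
            = ((Finset.filter (fun y => mkRC H ((repRC H x)⁻¹ * repRC H y) = b) Ys : Set (RC H))).ncard :=
              (Set.ncard_coe_finset _).symm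
          _ ≤ {y : RC H | mkRC H ((repRC H x)⁻¹ * repRC H y) = b}.ncard :=
              Set.ncard_le_ncard h1 h2.1
          _ ≤ (Fset H g).ncard := h2.2
      rw [hN]; exact_mod_cast h3
    calc ∑ b ∈ Finset.image (fun y => mkRC H ((repRC H x)⁻¹ * repRC H y)) Ys,
          (Finset.filter (fun y => mkRC H ((repRC H x)⁻¹ * repRC H y) = b) Ys).card • ‖ξ b‖ ^ 2
        ≤ ∑ b ∈ Finset.image (fun y => mkRC H ((repRC H x)⁻¹ * repRC H y)) Ys, N * ‖ξ b‖ ^ 2 := by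
          refine Finset.sum_le_sum fun b _ => ?_
          rw [nsmul_eq_mul]
          exact mul_le_mul_of_nonneg_right (hcardfil b) (by positivity)
      _ = N * ∑ b ∈ Finset.image (fun y => mkRC H ((repRC H x)⁻¹ * repRC H y)) Ys, ‖ξ b‖ ^ 2 :=
          (Finset.mul_sum _ _ _).symm
      _ ≤ N * 1 := by
          refine mul_le_mul_of_nonneg_left ?_ hN0
          exact le_trans (Summable.sum_le_tsum _ (fun b _ => by positivity) hsum) htsum1
      _ = N := mul_one N
  -- assemble
  have total : ∑ y ∈ Ys, ‖convH H (Finsupp.single (mkDC H g) 1) ⇑ξ y‖ ^ 2 ≤ N ^ 3 := by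
    calc ∑ y ∈ Ys, ‖convH H (Finsupp.single (mkDC H g) 1) ⇑ξ y‖ ^ 2
        ≤ ∑ y ∈ Ys, N * ∑ x ∈ Fs, ‖ξ (mkRC H ((repRC H x)⁻¹ * repRC H y))‖ ^ 2 :=
          Finset.sum_le_sum fun y _ => step1 y
      _ = N * ∑ x ∈ Fs, ∑ y ∈ Ys, ‖ξ (mkRC H ((repRC H x)⁻¹ * repRC H y))‖ ^ 2 := by
          rw [← Finset.mul_sum, Finset.sum_comm]
      _ ≤ N * ∑ x ∈ Fs, N :=
          mul_le_mul_of_nonneg_left (Finset.sum_le_sum step2) hN0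
      _ = N * ((Fs.card : ℝ) * N) := by rw [Finset.sum_const, nsmul_eq_mul]
      _ = N ^ 3 := by rw [hcard]; ring
  rw [l2f, tsum_eq_sum (s := Ys) (fun y hy => by rw [hconv0 y hy]; simp)]
  exact Real.sqrt_le_sqrt total

end Stmt7Aux


/-- property (RD′) with constants `C, s` implies that the number of
right cosets contained in `HgH` is at most `C² (1 + L g)^{2s}`. -/
theorem stmt7 {G : Type*} [Group G] (H : Subgroup G) (hAN : AlmostNormal H)
    (L : G → ℝ) (hL : IsLengthFunction L) (hLH : ∀ h ∈ H, L h = 0)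
    (C s : ℝ) (hC : 0 < C) (hs : 0 < s)
    (hRD' : ∀ f : DC H →₀ ℂ, opNH H f ≤ C * wnormH' H L s f) :
    ∀ g : G,
      ({x : RC H | ∃ h ∈ H, ∃ k ∈ H, x = mkRC H (h * g * k)}.ncard : ℝ) ≤
        C ^ 2 * (1 + L g) ^ (2 * s) := by
  classical
  intro g
  show ((Stmt7Aux.Fset H g).ncard : ℝ) ≤ C ^ 2 * (1 + L g) ^ (2 * s)
  open Stmt7Aux in
  have hFfin : (Stmt7Aux.Fset H g).Finite := hAN g
  set N : ℝ := ((Stmt7Aux.Fset H g).ncard : ℝ) with hN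
  have hN0 : 0 ≤ N := Nat.cast_nonneg _
  set Fs : Finset (RC H) := hFfin.toFinset with hFs
  have hcard : (Fs.card : ℝ) = N := by
    rw [hN, Set.ncard_eq_toFinset_card (Stmt7Aux.Fset H g) hFfin]
  set f : DC H →₀ ℂ := Finsupp.single (mkDC H g) 1 with hf
  set ξ₀ : RC H →₀ ℂ := Finsupp.single (mkRC H 1) 1 with hξ₀
  -- ℓ² norm of ξ₀ is 1
  have hl2ξ₀ : l2f ⇑ξ₀ = 1 := by
    rw [l2f, tsum_eq_single (mkRC H 1) ?_]
    · rw [hξ₀, Finsupp.single_eq_same]; simp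
    · intro b hb
      rw [hξ₀, Finsupp.single_eq_of_ne hb]; simp
  -- the convolution is supported on Fs
  have hsupp : ∀ y ∉ Fs, convH H f ⇑ξ₀ y = 0 := by
    intro y hy
    rw [hf, Stmt7Aux.conv_eq H hAN g]
    apply Finset.sum_eq_zero
    intro x hx
    by_contra hne
    have hz : mkRC H ((repRC H x)⁻¹ * repRC H y) = mkRC H 1 := by
      by_contra hzz
      exact hne (Finsupp.single_eq_of_ne fun h => hzz h)
    have h1 : (1 : G) * ((repRC H x)⁻¹ * repRC H y)⁻¹ ∈ H := (Stmt7Aux.mkRC_eq_iff H _ _).mp hz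
    have h3 : (repRC H x)⁻¹ * repRC H y ∈ H := by
      have h2 := inv_mem h1
      simpa using h2
    have hxF : toDC H x = mkDC H g :=
      (Stmt7Aux.mem_Fset_iff H g x).mp (hFfin.mem_toFinset.mp hx)
    have hxF' : DoubleCoset.mk H H (repRC H x) = DoubleCoset.mk H H g := hxF
    obtain ⟨h, hh, k, hk, hg⟩ := (DoubleCoset.eq H H _ g).mp hxF'
    apply hy
    rw [hFs, hFfin.mem_toFinset]
    refine ⟨h⁻¹, inv_mem hh, k⁻¹ * ((repRC H x)⁻¹ * repRC H y), mul_mem (inv_mem hk) h3, ?_⟩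
    have he2 : h⁻¹ * g * (k⁻¹ * ((repRC H x)⁻¹ * repRC H y)) = repRC H y := by
      conv_lhs => rw [hg]
      group
    rw [he2]
    exact (Stmt7Aux.mkRC_rep H y).symm
  -- lower bound: N ≤ ‖f ∗ ξ₀‖²
  have hlow : N ≤ ∑' y : RC H, ‖convH H f ⇑ξ₀ y‖ ^ 2 := by
    rw [tsum_eq_sum (s := Fs) (fun y hy => by rw [hsupp y hy]; simp)]
    have hone : ∀ y ∈ Fs, (1 : ℝ) ≤ ‖convH H f ⇑ξ₀ y‖ ^ 2 := by
      intro y hyF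
      have h1 : (1 : ℝ) ≤ (convH H f ⇑ξ₀ y).re := by
        rw [hf, Stmt7Aux.conv_eq H hAN g, Complex.re_sum]
        have hterm : ∀ x ∈ Fs, (0 : ℝ) ≤ (ξ₀ (mkRC H ((repRC H x)⁻¹ * repRC H y))).re := by
          intro x _
          rcases eq_or_ne (mkRC H 1) (mkRC H ((repRC H x)⁻¹ * repRC H y)) with h | h
          · rw [hξ₀, ← h, Finsupp.single_eq_same]; norm_num
          · rw [hξ₀, Finsupp.single_eq_of_ne (Ne.symm h)]; simp
        have hyy : (ξ₀ (mkRC H ((repRC H y)⁻¹ * repRC H y))).re = 1 := by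
          rw [inv_mul_cancel, hξ₀, Finsupp.single_eq_same, Complex.one_re]
        calc (1 : ℝ) = (ξ₀ (mkRC H ((repRC H y)⁻¹ * repRC H y))).re := hyy.symm
          _ ≤ ∑ x ∈ Fs, (ξ₀ (mkRC H ((repRC H x)⁻¹ * repRC H y))).re :=
            Finset.single_le_sum hterm hyF
      have h2 : (1 : ℝ) ≤ ‖convH H f ⇑ξ₀ y‖ := by
        refine le_trans h1 (le_trans (le_abs_self _) ?_)
        exact Complex.abs_re_le_norm _
      nlinarith
    calc N = (Fs.card : ℝ) := hcard.symm
      _ = ∑ _y ∈ Fs, (1 : ℝ) := by rw [Finset.sum_const, nsmul_eq_mul, mul_one]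
      _ ≤ ∑ y ∈ Fs, ‖convH H f ⇑ξ₀ y‖ ^ 2 := Finset.sum_le_sum hone
  -- the operator norm bound
  have hmem : l2f (convH H f ⇑ξ₀) ∈
      {c : ℝ | ∃ ξ : RC H →₀ ℂ, l2f ⇑ξ ≤ 1 ∧ c = l2f (convH H f ⇑ξ)} :=
    ⟨ξ₀, le_of_eq hl2ξ₀, rfl⟩
  have hbdd : BddAbove {c : ℝ | ∃ ξ : RC H →₀ ℂ, l2f ⇑ξ ≤ 1 ∧ c = l2f (convH H f ⇑ξ)} := by
    refine ⟨Real.sqrt (N ^ 3), ?_⟩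
    rintro c ⟨ξ, hξ1, rfl⟩
    exact Stmt7Aux.conv_le H hAN g ξ hξ1
  have hop : l2f (convH H f ⇑ξ₀) ≤ opNH H f := le_csSup hbdd hmem
  -- the weighted norm bound
  have hout : DoubleCoset.mk H H (Quotient.out (mkDC H g)) = DoubleCoset.mk H H g :=
    DoubleCoset.out_eq' H H (mkDC H g)
  obtain ⟨h, hh, k, hk, hg⟩ := (DoubleCoset.eq H H _ g).mp hout
  have hLout : L (Quotient.out (mkDC H g)) ≤ L g := by
    have he : h⁻¹ * g * k⁻¹ = Quotient.out (mkDC H g) := by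
      conv_lhs => rw [hg]
      group
    rw [← he]
    calc L (h⁻¹ * g * k⁻¹) ≤ L (h⁻¹ * g) + L k⁻¹ := hL.2.1 _ _
      _ ≤ L h⁻¹ + L g + L k⁻¹ := by linarith [hL.2.1 h⁻¹ g]
      _ = L g := by rw [hL.2.2.1, hL.2.2.1, hLH h hh, hLH k hk]; ring
  have h1Lg : (0 : ℝ) ≤ 1 + L g := by linarith [hL.1 g]
  have hw : wnormH' H L s f ≤ Real.sqrt ((1 + L g) ^ (2 * s)) := by
    rw [wnormH']
    apply Real.sqrt_le_sqrt
    rw [hf, Finsupp.support_single_ne_zero _ one_ne_zero, Finset.sum_singleton,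
      Finsupp.single_eq_same, norm_one, one_pow, one_mul]
    refine Real.rpow_le_rpow ?_ (by linarith) (by positivity)
    linarith [hL.1 (Quotient.out (mkDC H g))]
  -- chain everything
  have h5 : Real.sqrt N ≤ C * Real.sqrt ((1 + L g) ^ (2 * s)) := by
    have hA : Real.sqrt N ≤ l2f (convH H f ⇑ξ₀) := Real.sqrt_le_sqrt hlow
    have hB : opNH H f ≤ C * wnormH' H L s f := hRD' f
    calc Real.sqrt N ≤ l2f (convH H f ⇑ξ₀) := hA
      _ ≤ opNH H f := hop
      _ ≤ C * wnormH' H L s f := hB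
      _ ≤ C * Real.sqrt ((1 + L g) ^ (2 * s)) := mul_le_mul_of_nonneg_left hw hC.le
  have h6 := pow_le_pow_left₀ (Real.sqrt_nonneg N) h5 2
  rw [Real.sq_sqrt hN0, mul_pow, Real.sq_sqrt (Real.rpow_nonneg h1Lg _)] at h6
  exact h6
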